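/- Let (X, I, q, g) be a deterministic commutative MDP such that for every x ∈ X the MDP starting at x has a uniform value in pure strategies v*(x). Then for every x₁ ∈ X and every ε > 0 there exists a pure strategy a ∈ I^ℕ such that liminf_{n→∞} γ_n(x₁, a) ≥ v*(x₁) − ε and such that the value is constant on the induced play: v*(x_t) = v*(x₁) for every t ≥ 1, where (x_t)_{t≥1} is the play induced by a from x₁. -/

import Mathlib

open Filter Topology

noncomputable section

/-- The play induced by an initial state `x₁` and a pure strategy `a` in a deterministic MDP:
`x₀ = x₁` and `x_{t+1} = q (x_t) (a t)`. -/
def play {X I : Type*} (q : X → I → X) (x₁ : X) (a : ℕ → I) : ℕ → X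
  | 0 => x₁
  | t + 1 => q (play q x₁ a t) (a t)

/-- The `n`-stage average payoff `γ_n(x₁, a)`. -/
def payoff {X I : Type*} (q : X → I → X) (g : X → I → ℝ) (x₁ : X) (a : ℕ → I) (n : ℕ) : ℝ :=
  (1 / (n : ℝ)) * ∑ t ∈ Finset.range n, g (play q x₁ a t) (a t)

/-- The `n`-stage value `v_n(x₁)`. -/
def nValue {X I : Type*} (q : X → I → X) (g : X → I → ℝ) (x₁ : X) (n : ℕ) : ℝ :=
  ⨆ a : ℕ → I, payoff q g x₁ a n

/-- The MDP starting at `x₁` has a uniform value `v` in pure strategies. -/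
def HasUniformValuePure {X I : Type*} (q : X → I → X) (g : X → I → ℝ) (x₁ : X) (v : ℝ) : Prop :=
  (∀ ε > (0 : ℝ), ∃ a : ℕ → I, v - ε ≤ liminf (fun n => payoff q g x₁ a n) atTop) ∧
    limsup (fun n => nValue q g x₁ n) atTop ≤ v

namespace MDPAux

variable {X I : Type*} (q : X → I → X) (g : X → I → ℝ)

lemma play_shift (x : X) (a : ℕ → I) (t : ℕ) :
    ∀ s, play q (play q x a t) (fun s => a (t + s)) s = play q x a (t + s)
  | 0 => rfl
  | s + 1 => by
    show q (play q (play q x a t) _ s) (a (t + s)) = q (play q x a (t + s)) (a (t + s))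
    rw [play_shift x a t s]

variable (hg : ∀ x i, g x i ∈ Set.Icc (0 : ℝ) 1)
include hg

lemma sum_nonneg' (x : X) (a : ℕ → I) (n : ℕ) :
    0 ≤ ∑ t ∈ Finset.range n, g (play q x a t) (a t) :=
  Finset.sum_nonneg fun t _ => (hg _ _).1

lemma sum_le' (x : X) (a : ℕ → I) (n : ℕ) :
    ∑ t ∈ Finset.range n, g (play q x a t) (a t) ≤ n := by
  calc ∑ t ∈ Finset.range n, g (play q x a t) (a t) ≤ ∑ _t ∈ Finset.range n, (1 : ℝ) :=
        Finset.sum_le_sum fun t _ => (hg _ _).2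
    _ = n := by simp

lemma payoff_nonneg (x : X) (a : ℕ → I) (n : ℕ) : 0 ≤ payoff q g x a n :=
  mul_nonneg (by positivity) (sum_nonneg' q g hg x a n)

lemma payoff_le_one (x : X) (a : ℕ → I) (n : ℕ) : payoff q g x a n ≤ 1 := by
  rcases Nat.eq_zero_or_pos n with h | h
  · simp [payoff, h]
  · have hn : (0 : ℝ) < n := by exact_mod_cast h
    calc payoff q g x a n ≤ (1 / (n : ℝ)) * n :=
          mul_le_mul_of_nonneg_left (sum_le' q g hg x a n) (by positivity)
      _ = 1 := by field_simp

/-- Two-sided estimate between the payoff of a shifted play and the original payoff. -/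
lemma payoff_shift_abs (x : X) (a : ℕ → I) (t n : ℕ) (hn : 1 ≤ n) :
    |payoff q g (play q x a t) (fun s => a (t + s)) n - payoff q g x a (t + n)| ≤ t / n := by
  have hsplit : ∑ s ∈ Finset.range (t + n), g (play q x a s) (a s)
      = (∑ s ∈ Finset.range t, g (play q x a s) (a s))
        + ∑ s ∈ Finset.range n, g (play q x a (t + s)) (a (t + s)) :=
    Finset.sum_range_add _ t n
  have hpay : payoff q g (play q x a t) (fun s => a (t + s)) n
      = (1 / (n : ℝ)) * ∑ s ∈ Finset.range n, g (play q x a (t + s)) (a (t + s)) := by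
    unfold payoff
    congr 1
    refine Finset.sum_congr rfl fun s _ => ?_
    rw [play_shift]
  set A := ∑ s ∈ Finset.range (t + n), g (play q x a s) (a s) with hA
  set B := ∑ s ∈ Finset.range t, g (play q x a s) (a s) with hB
  have hA0 : 0 ≤ A := sum_nonneg' q g hg x a (t + n)
  have hA1 : A ≤ (t : ℝ) + n := by
    have := sum_le' q g hg x a (t + n); push_cast at this ⊢; linarith
  have hB0 : 0 ≤ B := sum_nonneg' q g hg x a t
  have hB1 : B ≤ (t : ℝ) := sum_le' q g hg x a t
  have hN : (1 : ℝ) ≤ n := by exact_mod_cast hn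
  have hN0 : (0 : ℝ) < n := by linarith
  have hT0 : (0 : ℝ) ≤ t := Nat.cast_nonneg t
  have hTN : (0 : ℝ) < t + n := by linarith
  have hsum : ∑ s ∈ Finset.range n, g (play q x a (t + s)) (a (t + s)) = A - B := by
    rw [hsplit]; ring
  have hcast : ((t + n : ℕ) : ℝ) = (t : ℝ) + n := by push_cast; ring
  rw [hpay, hsum]
  have hval : payoff q g x a (t + n) = (1 / ((t : ℝ) + n)) * A := by
    unfold payoff; rw [hcast]
  have e : (1 / (n : ℝ) * (A - B)) - (1 / ((t : ℝ) + n)) * A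
      = (A * (t : ℝ) - B * ((t : ℝ) + n)) / ((n : ℝ) * ((t : ℝ) + n)) := by
    field_simp
    ring
  rw [hval, abs_le, e]
  constructor
  · rw [neg_le, ← neg_div, div_le_div_iff₀ (by positivity : (0:ℝ) < (n:ℝ) * ((t:ℝ) + n)) hN0]
    have h2 : B * ((t : ℝ) + n) ≤ (t : ℝ) * ((t : ℝ) + n) :=
      mul_le_mul_of_nonneg_right hB1 (le_of_lt hTN)
    nlinarith [mul_nonneg (mul_nonneg hA0 hT0) (le_of_lt hN0)]
  · rw [div_le_div_iff₀ (by positivity) hN0]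
    have h2 : A * (t : ℝ) ≤ ((t : ℝ) + n) * (t : ℝ) := mul_le_mul_of_nonneg_right hA1 hT0
    nlinarith [mul_nonneg hB0 (le_of_lt hTN)]

/-- Eventual lower bound on payoffs. -/
def ELB (x : X) (a : ℕ → I) (L : ℝ) : Prop :=
  ∀ η > (0 : ℝ), ∀ᶠ n in atTop, L - η ≤ payoff q g x a n

omit hg in
lemma elb_of_le_liminf (x : X) (a : ℕ → I) (L : ℝ)
    (hL : L ≤ liminf (fun n => payoff q g x a n) atTop)
    (hbd : Filter.IsBoundedUnder (· ≥ ·) atTop (fun n => payoff q g x a n)) :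
    ELB q g x a L := by
  intro η hη
  have h1 : L - η < liminf (fun n => payoff q g x a n) atTop := lt_of_lt_of_le (by linarith) hL
  exact (eventually_lt_of_lt_liminf h1 hbd).mono fun n hn => le_of_lt hn

lemma elb_shift (x : X) (a : ℕ → I) (L : ℝ) (t : ℕ) (h : ELB q g x a L) :
    ELB q g (play q x a t) (fun s => a (t + s)) L := by
  intro η hη
  obtain ⟨N₁, hN₁⟩ := eventually_atTop.1 (h (η / 2) (by linarith))
  obtain ⟨N₂, hN₂⟩ := eventually_atTop.1
    ((tendsto_const_div_atTop_nhds_zero_nat (t : ℝ)).eventually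
      (eventually_le_nhds (show (0:ℝ) < η / 2 by linarith)))
  refine eventually_atTop.2 ⟨max (max N₁ N₂) 1, fun n hn => ?_⟩
  have hn1 : 1 ≤ n := le_trans (le_max_right _ 1) hn
  have hn2 : N₂ ≤ n := le_trans (le_trans (le_max_right N₁ N₂) (le_max_left _ 1)) hn
  have hn3 : N₁ ≤ n := le_trans (le_trans (le_max_left N₁ N₂) (le_max_left _ 1)) hn
  have habs := payoff_shift_abs q g hg x a t n hn1
  have h1 : payoff q g x a (t + n) - (t : ℝ) / n
      ≤ payoff q g (play q x a t) (fun s => a (t + s)) n := by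
    have := (abs_le.1 habs).1
    linarith
  have h2 : L - η / 2 ≤ payoff q g x a (t + n) := hN₁ (t + n) (by omega)
  have h3 : (t : ℝ) / n ≤ η / 2 := hN₂ n hn2
  linarith

lemma elb_unshift (x : X) (a : ℕ → I) (L : ℝ) (t : ℕ)
    (h : ELB q g (play q x a t) (fun s => a (t + s)) L) :
    ELB q g x a L := by
  intro η hη
  obtain ⟨N₁, hN₁⟩ := eventually_atTop.1 (h (η / 2) (by linarith))
  obtain ⟨N₂, hN₂⟩ := eventually_atTop.1
    ((tendsto_const_div_atTop_nhds_zero_nat (t : ℝ)).eventually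
      (eventually_le_nhds (show (0:ℝ) < η / 2 by linarith)))
  refine eventually_atTop.2 ⟨t + max (max N₁ N₂) 1, fun m hm => ?_⟩
  set n := m - t with hn
  have hmn : m = t + n := by omega
  have hn1 : 1 ≤ n := by omega
  have hn2 : N₂ ≤ n := by omega
  have hn3 : N₁ ≤ n := by omega
  have habs := payoff_shift_abs q g hg x a t n hn1
  have h1 : payoff q g (play q x a t) (fun s => a (t + s)) n - (t : ℝ) / n
      ≤ payoff q g x a (t + n) := by
    have := (abs_le.1 habs).2
    linarith
  have h2 := hN₁ n hn3
  have h3 := hN₂ n hn2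
  rw [hmn]
  linarith

variable [Nonempty I]

lemma nValue_le_one (y : X) (n : ℕ) : nValue q g y n ≤ 1 := by
  unfold nValue
  refine ciSup_le fun a => ?_
  exact payoff_le_one q g hg y a n

lemma payoff_le_nValue (y : X) (b : ℕ → I) (n : ℕ) : payoff q g y b n ≤ nValue q g y n := by
  unfold nValue
  have hb : BddAbove (Set.range fun a : ℕ → I => payoff q g y a n) :=
    ⟨1, by rintro z ⟨a, rfl⟩; exact payoff_le_one q g hg y a n⟩
  exact le_ciSup hb b

/-- Core: an eventual lower bound on payoffs gives a lower bound on the uniform value. -/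
lemma le_value_of_elb (v : X → ℝ) (hv : ∀ x, HasUniformValuePure q g x (v x))
    (y : X) (b : ℕ → I) (L : ℝ) (h : ELB q g y b L) : L ≤ v y := by
  refine le_of_forall_pos_le_add fun η hη => ?_
  have hbdd : Filter.IsBoundedUnder (· ≤ ·) atTop (fun n => nValue q g y n) :=
    ⟨1, Filter.eventually_map.2 (Filter.Eventually.of_forall fun n => nValue_le_one q g hg y n)⟩
  have hfreq : ∃ᶠ n in atTop, L - η ≤ nValue q g y n :=
    ((h η hη).mono fun n hn => le_trans hn (payoff_le_nValue q g hg y b n)).frequently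
  have := le_limsup_of_frequently_le hfreq hbdd
  have h2 := (hv y).2
  linarith

/-- The uniform value is non-increasing along one step. -/
lemma value_step (v : X → ℝ) (hv : ∀ x, HasUniformValuePure q g x (v x)) (x : X) (i : I) :
    v (q x i) ≤ v x := by
  refine le_of_forall_pos_le_add fun η hη => ?_
  obtain ⟨b, hb⟩ := (hv (q x i)).1 η hη
  set c : ℕ → I := fun n => Nat.rec i (fun m _ => b m) n with hc
  have hc0 : c 0 = i := rfl
  have hplay1 : play q x c 1 = q x i := by
    show q (play q x c 0) (c 0) = q x i
    rfl
  have hcs : (fun s => c (1 + s)) = b := by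
    funext s
    have : 1 + s = s + 1 := Nat.add_comm 1 s
    rw [this]
  have hbd : Filter.IsBoundedUnder (· ≥ ·) atTop (fun n => payoff q g (q x i) b n) :=
    ⟨0, Filter.eventually_map.2
      (Filter.Eventually.of_forall fun n => payoff_nonneg q g hg (q x i) b n)⟩
  have helb : ELB q g (q x i) b (v (q x i) - η) := elb_of_le_liminf q g _ b _ hb hbd
  have helb' : ELB q g (play q x c 1) (fun s => c (1 + s)) (v (q x i) - η) := by
    rw [hplay1, hcs]; exact helb
  have := le_value_of_elb q g hg v hv x c _ (elb_unshift q g hg x c _ 1 helb')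
  linarith

lemma value_foldl (v : X → ℝ) (hv : ∀ x, HasUniformValuePure q g x (v x)) :
    ∀ (l : List I) (x : X), v (l.foldl q x) ≤ v x := by
  intro l
  induction l with
  | nil => intro x; exact le_refl _
  | cons i l ih =>
    intro x
    calc v ((i :: l).foldl q x) = v (l.foldl q (q x i)) := rfl
      _ ≤ v (q x i) := ih (q x i)
      _ ≤ v x := value_step q g hg v hv x i

omit hg in
lemma play_eq_foldl (x : X) (a : ℕ → I) : ∀ t, play q x a t = ((List.range t).map a).foldl q x
  | 0 => rfl
  | t + 1 => by
    rw [List.range_succ, List.map_append, List.foldl_append]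
    show q (play q x a t) (a t) = _
    rw [play_eq_foldl x a t]
    rfl

lemma value_mono_multiset (v : X → ℝ) (hv : ∀ x, HasUniformValuePure q g x (v x))
    (hcomm : ∀ x i i', q (q x i) i' = q (q x i') i)
    (x : X) (l₁ l₂ : List I) (h : (↑l₁ : Multiset I) ≤ (↑l₂ : Multiset I)) :
    v (l₂.foldl q x) ≤ v (l₁.foldl q x) := by
  haveI : RightCommutative q := ⟨fun b i j => hcomm b i j⟩
  obtain ⟨u, hu⟩ := Multiset.le_iff_exists_add.1 h
  have hperm : List.Perm l₂ (l₁ ++ u.toList) := by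
    rw [← Multiset.coe_eq_coe]
    simp only [← Multiset.coe_add, Multiset.coe_toList] at *
    rw [hu]
  rw [hperm.foldl_eq, List.foldl_append]
  exact value_foldl q g hg v hv _ _

lemma dickson [Fintype I] (v : X → ℝ) (hv : ∀ x, HasUniformValuePure q g x (v x))
    (hcomm : ∀ x i i', q (q x i) i' = q (q x i') i) (x₁ : X) :
    ∃ δ > (0 : ℝ), ∀ l : List I,
      v x₁ - δ ≤ v (l.foldl q x₁) → v (l.foldl q x₁) = v x₁ := by
  classical
  by_contra hcon
  push_neg at hcon
  have hstep : ∀ n : ℕ, ∃ l : List I,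
      v x₁ - 1 / (n + 1 : ℝ) ≤ v (l.foldl q x₁) ∧ v (l.foldl q x₁) ≠ v x₁ := by
    intro n
    exact hcon (1 / (n + 1 : ℝ)) (by positivity)
  choose l hl1 hl2 using hstep
  set c : ℕ → (I →₀ ℕ) := fun n => Multiset.toFinsupp (↑(l n)) with hc
  obtain ⟨φ, hφ⟩ := (Set.isPWO_of_wellQuasiOrderedLE (Set.univ : Set (I →₀ ℕ))).exists_monotone_subseq (f := c)
    (fun n => Set.mem_univ _)
  have hmono : ∀ k, (↑(l (φ 0)) : Multiset I) ≤ ↑(l (φ k)) := by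
    intro k
    have h0 : c (φ 0) ≤ c (φ k) := hφ (Nat.zero_le k)
    rw [Multiset.le_iff_count]
    intro i
    have h1 := Finsupp.le_def.1 h0 i
    simp only [hc, Multiset.toFinsupp_apply] at h1
    simpa using h1
  have hlt : ∀ k, v ((l (φ k)).foldl q x₁) ≤ v ((l (φ 0)).foldl q x₁) :=
    fun k => value_mono_multiset q g hg v hv hcomm x₁ _ _ (hmono k)
  have hC : v ((l (φ 0)).foldl q x₁) < v x₁ :=
    lt_of_le_of_ne (value_foldl q g hg v hv _ _) (hl2 _)
  have hge : v x₁ ≤ v ((l (φ 0)).foldl q x₁) := by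
    refine le_of_forall_pos_le_add fun ε hε => ?_
    obtain ⟨k, hk⟩ := exists_nat_one_div_lt hε
    have h1 := hl1 (φ k)
    have hφk : (k : ℝ) ≤ (φ k : ℝ) := by exact_mod_cast φ.strictMono.le_apply
    have h2 : (1 : ℝ) / ((φ k : ℝ) + 1) ≤ 1 / ((k : ℝ) + 1) := by
      apply one_div_le_one_div_of_le (by positivity)
      linarith
    linarith [hlt k]
  linarith

end MDPAux

/-- In a deterministic commutative MDP having a uniform value in pure strategies at every
initial state, for every `ε > 0` there is an `ε`-optimal pure strategy along whose induced play
the uniform value is constant. -/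
theorem exists_eps_optimal_with_constant_value
    {X I : Type*} [Fintype I] [Nonempty I]
    (q : X → I → X) (g : X → I → ℝ)
    (hg : ∀ x i, g x i ∈ Set.Icc (0 : ℝ) 1)
    (hcomm : ∀ x i i', q (q x i) i' = q (q x i') i)
    (v : X → ℝ) (hv : ∀ x, HasUniformValuePure q g x (v x))
    (x₁ : X) :
    ∀ ε > (0 : ℝ), ∃ a : ℕ → I,
      v x₁ - ε ≤ liminf (fun n => payoff q g x₁ a n) atTop ∧
      ∀ t : ℕ, v (play q x₁ a t) = v x₁ := by
  intro ε hε
  obtain ⟨δ, hδ, hD⟩ := MDPAux.dickson q g hg v hv hcomm x₁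
  have hε' : 0 < min ε δ := lt_min hε hδ
  obtain ⟨a, ha⟩ := (hv x₁).1 (min ε δ) hε'
  refine ⟨a, ?_, ?_⟩
  · have h1 := min_le_left ε δ
    have h2 : v x₁ - ε ≤ v x₁ - min ε δ := by linarith
    linarith
  · intro t
    have hbd : Filter.IsBoundedUnder (· ≥ ·) atTop (fun n => payoff q g x₁ a n) :=
      ⟨0, Filter.eventually_map.2
        (Filter.Eventually.of_forall fun n => MDPAux.payoff_nonneg q g hg x₁ a n)⟩
    have helb := MDPAux.elb_of_le_liminf q g x₁ a _ ha hbd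
    have h1 : v x₁ - min ε δ ≤ v (play q x₁ a t) :=
      MDPAux.le_value_of_elb q g hg v hv _ _ _ (MDPAux.elb_shift q g hg x₁ a _ t helb)
    have hfold := MDPAux.play_eq_foldl q x₁ a t
    rw [hfold] at h1 ⊢
    have h2 : v x₁ - δ ≤ v (((List.range t).map a).foldl q x₁) := by
      have := min_le_right ε δ
      linarith
    exact hD _ h2
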